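/- Let n ≥ 1, λ ∈ ℝ, ρ ∈ [0,1], and let S be a simple graph with vertex set V(S) ⊆ [n], edge set E(S), and no isolated vertices, its edges (i,j) being pairs with i < j. Then, for Y distributed according to the planted submatrix measure P_{λ, ρ, n}: E[∏_{(i,j) ∈ E(S)} Y_{ij}] = λ^{|E(S)|} · ρ^{|V(S)|}. -/

import Mathlib

open MeasureTheory ProbabilityTheory Filter
open scoped ENNReal NNReal

/-- Bernoulli(p) law on ℝ (mass p at 1, mass 1-p at 0). -/
noncomputable def bernoulliReal (p : ℝ) : Measure ℝ :=
  ENNReal.ofReal p • Measure.dirac 1 + ENNReal.ofReal (1 - p) • Measure.dirac 0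

/-- Index set of the entries of a symmetric `n × n` matrix: pairs `(i,j)` with `i ≤ j`. -/
abbrev SymIdx (n : ℕ) := {p : Fin n × Fin n // p.1 ≤ p.2}

/-- Index set of unordered pairs `{i,j} ⊆ [n]`, encoded as pairs `(i,j)` with `i < j`. -/
abbrev PairIdx (n : ℕ) := {p : Fin n × Fin n // p.1 < p.2}

/-- The noise law `Q_n`: a symmetric Gaussian matrix with `N(0,1)` off-diagonal
entries and `N(0,2)` diagonal entries. -/
noncomputable def noiseMeasure (n : ℕ) : Measure (SymIdx n → ℝ) :=
  Measure.pi fun e => gaussianReal 0 (if e.1.1 = e.1.2 then 2 else 1)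

/-- The planted submatrix measure `P_{λ,ρ,n}`: the law of `Y = λ θ θᵀ + W` with
`θ` having i.i.d. Bernoulli(ρ) entries and `W ∼ Q_n` independent of `θ`. -/
noncomputable def plantedSubmatrix (lam ρ : ℝ) (n : ℕ) : Measure (SymIdx n → ℝ) :=
  ((Measure.pi fun _ : Fin n => bernoulliReal ρ).prod (noiseMeasure n)).map
    (fun p e => lam * p.1 e.1.1 * p.1 e.1.2 + p.2 e)

/-! ### Auxiliary lemmas -/

section Aux

lemma integrable_dirac'' {f : ℝ → ℝ} (hf : Measurable f) (a : ℝ) :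
    Integrable f (Measure.dirac a) := by
  refine ⟨hf.aestronglyMeasurable, ?_⟩
  rw [HasFiniteIntegral, lintegral_dirac' _ hf.enorm]
  exact enorm_lt_top

lemma integrable_bernoulliReal {f : ℝ → ℝ} (hf : Measurable f) (p : ℝ) :
    Integrable f (bernoulliReal p) := by
  unfold bernoulliReal
  exact Integrable.add_measure
    ((integrable_dirac'' hf 1).smul_measure ENNReal.ofReal_ne_top)
    ((integrable_dirac'' hf 0).smul_measure ENNReal.ofReal_ne_top)

lemma integral_bernoulliReal {f : ℝ → ℝ} (hf : Measurable f) {p : ℝ} (h0 : 0 ≤ p) (h1 : p ≤ 1) :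
    ∫ x, f x ∂bernoulliReal p = p * f 1 + (1 - p) * f 0 := by
  unfold bernoulliReal
  rw [integral_add_measure
      ((integrable_dirac'' hf 1).smul_measure ENNReal.ofReal_ne_top)
      ((integrable_dirac'' hf 0).smul_measure ENNReal.ofReal_ne_top),
    integral_smul_measure, integral_smul_measure, integral_dirac, integral_dirac,
    ENNReal.toReal_ofReal h0, ENNReal.toReal_ofReal (by linarith)]
  simp [smul_eq_mul]

lemma isProbBernoulli {p : ℝ} (h0 : 0 ≤ p) (h1 : p ≤ 1) :
    IsProbabilityMeasure (bernoulliReal p) := by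
  constructor
  unfold bernoulliReal
  simp only [Measure.add_apply, Measure.smul_apply, Measure.dirac_apply_of_mem (Set.mem_univ _),
    smul_eq_mul, mul_one]
  rw [← ENNReal.ofReal_add h0 (by linarith), ENNReal.ofReal_eq_one.mpr (by ring)]

lemma bernoulli_moment {p : ℝ} (h0 : 0 ≤ p) (h1 : p ≤ 1) (k : ℕ) :
    ∫ x, x ^ k ∂bernoulliReal p = if k = 0 then 1 else p := by
  rw [integral_bernoulliReal (f := fun x => x ^ k) (by fun_prop) h0 h1]
  rcases Nat.eq_zero_or_pos k with hk | hk
  · simp [hk]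
  · rw [if_neg hk.ne', one_pow, zero_pow hk.ne']; ring

lemma integrable_id_gaussianReal (v : ℝ≥0) :
    Integrable (fun x : ℝ => x) (gaussianReal 0 v) := by
  by_cases hv : v = 0
  · subst hv
    rw [gaussianReal_zero_var]
    exact integrable_dirac'' measurable_id 0
  · have hv' : (0:ℝ) < (v:ℝ) := lt_of_le_of_ne v.coe_nonneg (fun h => hv (by exact_mod_cast h.symm))
    have hpos : (0:ℝ) < (2 * (v:ℝ))⁻¹ := by positivity
    rw [gaussianReal_of_var_ne_zero _ hv,
      integrable_withDensity_iff_integrable_smul' (measurable_gaussianPDF 0 v)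
        (ae_of_all _ fun x => ENNReal.ofReal_lt_top)]
    have heq : ∀ x : ℝ, (gaussianPDF 0 v x).toReal • x
        = (Real.sqrt (2 * Real.pi * v))⁻¹ * (x * Real.exp (-(2 * (v:ℝ))⁻¹ * x ^ 2)) := by
      intro x
      rw [gaussianPDF, ENNReal.toReal_ofReal (gaussianPDFReal_nonneg 0 v x), smul_eq_mul,
        gaussianPDFReal]
      have : -(x - 0) ^ 2 / (2 * (v:ℝ)) = -(2 * (v:ℝ))⁻¹ * x ^ 2 := by
        field_simp
        ring
      rw [this]; ring
    simp only [heq]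
    exact (integrable_mul_exp_neg_mul_sq hpos).const_mul _

lemma integral_id_gaussianReal_zero (v : ℝ≥0) :
    ∫ x, x ∂gaussianReal 0 v = 0 := by
  have h1 : (NNReal.mk ((-1:ℝ)^2) (sq_nonneg _)) = 1 := by ext; norm_num
  have hmap := gaussianReal_map_const_mul (μ := 0) (v := v) (-1)
  rw [mul_zero, h1, one_mul] at hmap
  have h3 : ∫ x, x ∂gaussianReal 0 v = ∫ x, (-1 : ℝ) * x ∂gaussianReal 0 v := by
    conv_lhs => rw [← hmap]
    exact (integral_map (f := fun y : ℝ => y) (φ := fun x : ℝ => (-1:ℝ) * x)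
      (by fun_prop) measurable_id.aestronglyMeasurable)
  have h2 : ∫ x, (-1 : ℝ) * x ∂gaussianReal 0 v = - ∫ x, x ∂gaussianReal 0 v := by
    simp only [neg_one_mul]
    exact integral_neg _
  linarith [h3, h2]

lemma integrable_pi_prod {ι : Type*} [Fintype ι] (μ : ι → Measure ℝ) [∀ i, SigmaFinite (μ i)]
    (f : ι → ℝ → ℝ) (hf : ∀ i, Integrable (f i) (μ i)) :
    Integrable (fun x : ι → ℝ => ∏ i, f i (x i)) (Measure.pi μ) := by
  letI inst : ∀ i : ι, MeasureSpace ((fun _ : ι => ℝ) i) := fun i => ⟨μ i⟩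
  exact Integrable.fintype_prod_dep (μ := μ) hf

lemma integral_pi_prod {ι : Type*} [Fintype ι] (μ : ι → Measure ℝ) [∀ i, SigmaFinite (μ i)]
    (f : ι → ℝ → ℝ) :
    ∫ x : ι → ℝ, ∏ i, f i (x i) ∂Measure.pi μ = ∏ i, ∫ x, f i x ∂μ i := by
  letI inst : ∀ i : ι, MeasureSpace ((fun _ : ι => ℝ) i) := fun i => ⟨μ i⟩
  exact integral_fintype_prod_eq_prod (μ := μ) f

/-- degree of vertex `v` in the edge set `T`. -/
def degE {n : ℕ} (T : Finset (PairIdx n)) (v : Fin n) : ℕ :=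
  ∑ e ∈ T, ((if e.1.1 = v then 1 else 0) + (if e.1.2 = v then 1 else 0))

lemma prod_theta_eq {n : ℕ} (T : Finset (PairIdx n)) (θ : Fin n → ℝ) :
    ∏ e ∈ T, θ e.1.1 * θ e.1.2 = ∏ v : Fin n, θ v ^ degE T v := by
  unfold degE
  rw [Finset.prod_congr rfl fun v _ => (Finset.prod_pow_eq_pow_sum T _ (θ v)).symm,
    Finset.prod_comm]
  refine Finset.prod_congr rfl fun e _ => ?_
  simp only [pow_add]
  rw [Finset.prod_mul_distrib]
  congr 1
  · simpa using Fintype.prod_ite_eq e.1.1 (fun v => θ v)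
  · simpa using Fintype.prod_ite_eq e.1.2 (fun v => θ v)

end Aux

set_option maxHeartbeats 1000000 in
theorem statement11 (n : ℕ) (hn : 1 ≤ n) (lam ρ : ℝ) (hρ : ρ ∈ Set.Icc (0:ℝ) 1)
    (VS : Finset (Fin n)) (ES : Finset (PairIdx n))
    (hinc : ∀ e ∈ ES, e.1.1 ∈ VS ∧ e.1.2 ∈ VS)
    (hnoiso : ∀ v ∈ VS, ∃ e ∈ ES, v = e.1.1 ∨ v = e.1.2) :
    ∫ y, ∏ e ∈ ES, y (⟨e.1, le_of_lt e.2⟩ : SymIdx n) ∂(plantedSubmatrix lam ρ n)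
      = lam ^ ES.card * ρ ^ VS.card := by
  classical
  obtain ⟨hρ0, hρ1⟩ := hρ
  haveI hPB : IsProbabilityMeasure (bernoulliReal ρ) := isProbBernoulli hρ0 hρ1
  set μθ : Measure (Fin n → ℝ) := Measure.pi fun _ : Fin n => bernoulliReal ρ with hμθ
  haveI : IsProbabilityMeasure μθ := by rw [hμθ]; infer_instance
  haveI : IsProbabilityMeasure (noiseMeasure n) := by unfold noiseMeasure; infer_instance
  -- the embedding of edge indices into matrix-entry indices
  set κ : PairIdx n → SymIdx n := fun e => ⟨e.1, le_of_lt e.2⟩ with hκ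
  have hκinj : Function.Injective κ := by
    intro a b h
    have h2 : (κ a).1 = (κ b).1 := congrArg (fun u : SymIdx n => u.1) h
    exact Subtype.ext h2
  -- Step 1: unfold the map
  have hT : Measurable (fun p : (Fin n → ℝ) × (SymIdx n → ℝ) => fun e : SymIdx n =>
      lam * p.1 e.1.1 * p.1 e.1.2 + p.2 e) := by
    apply measurable_pi_lambda
    intro e
    fun_prop
  have hF : Measurable (fun y : SymIdx n → ℝ => ∏ e ∈ ES, y (κ e)) :=
    Finset.measurable_prod _ fun e _ => measurable_pi_apply _
  rw [show plantedSubmatrix lam ρ n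
      = (μθ.prod (noiseMeasure n)).map
        (fun p e => lam * p.1 e.1.1 * p.1 e.1.2 + p.2 e) from rfl,
    integral_map hT.aemeasurable hF.aestronglyMeasurable]
  -- Step 2: expand the product
  have hexp : ∫ p : (Fin n → ℝ) × (SymIdx n → ℝ),
        ∏ e ∈ ES, (lam * p.1 e.1.1 * p.1 e.1.2 + p.2 (κ e)) ∂(μθ.prod (noiseMeasure n))
      = ∫ p : (Fin n → ℝ) × (SymIdx n → ℝ),
        ∑ T ∈ ES.powerset, (∏ e ∈ T, lam * p.1 e.1.1 * p.1 e.1.2) *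
          ∏ e ∈ ES \ T, p.2 (κ e) ∂(μθ.prod (noiseMeasure n)) :=
    integral_congr_ae (ae_of_all _ fun p => Finset.prod_add _ _ ES)
  rw [hexp]
  -- integrability of the θ-factor
  have hAint : ∀ T : Finset (PairIdx n),
      Integrable (fun θ : Fin n → ℝ => ∏ e ∈ T, lam * θ e.1.1 * θ e.1.2) μθ := by
    intro T
    have h1 : (fun θ : Fin n → ℝ => ∏ e ∈ T, lam * θ e.1.1 * θ e.1.2)
        = fun θ => lam ^ T.card * ∏ v : Fin n, θ v ^ degE T v := by
      funext θ
      simp_rw [mul_assoc]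
      rw [Finset.prod_mul_distrib, Finset.prod_const, prod_theta_eq]
    rw [h1, hμθ]
    exact (integrable_pi_prod (fun _ : Fin n => bernoulliReal ρ) (fun v x => x ^ degE T v)
      (fun v => integrable_bernoulliReal (by fun_prop) ρ)).const_mul _
  -- integrability of the W-factor
  have hBrw : ∀ T : Finset (PairIdx n), (fun w : SymIdx n → ℝ => ∏ e ∈ ES \ T, w (κ e))
      = fun w => ∏ u : SymIdx n,
        (if u ∈ (ES \ T).image κ then w u else (1:ℝ)) := by
    intro T
    funext w
    rw [← Finset.prod_image (f := fun u => w u) (fun a _ b _ h => hκinj h)]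
    exact (Fintype.prod_ite_mem ((ES \ T).image κ) (fun u => w u)).symm
  have hBint : ∀ T : Finset (PairIdx n),
      Integrable (fun w : SymIdx n → ℝ => ∏ e ∈ ES \ T, w (κ e)) (noiseMeasure n) := by
    intro T
    rw [hBrw T]
    refine integrable_pi_prod (fun e : SymIdx n => gaussianReal 0 (if e.1.1 = e.1.2 then 2 else 1))
      (fun u x => if u ∈ (ES \ T).image κ then x else (1:ℝ)) (fun u => ?_)
    by_cases h : u ∈ (ES \ T).image κ
    · simp only [if_pos h]
      exact integrable_id_gaussianReal _
    · simp only [if_neg h]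
      exact integrable_const 1
  -- swap integral and sum
  rw [integral_finset_sum _ (fun T _ => Integrable.mul_prod (hAint T) (hBint T))]
  -- only the `T = ES` term survives
  rw [Finset.sum_eq_single_of_mem ES (Finset.mem_powerset_self ES)]
  · -- the main term
    rw [integral_prod_mul (f := fun θ : Fin n → ℝ => ∏ e ∈ ES, lam * θ e.1.1 * θ e.1.2)
      (g := fun w : SymIdx n → ℝ => ∏ e ∈ ES \ ES, w (κ e))]
    have hB1 : ∫ w : SymIdx n → ℝ, ∏ e ∈ ES \ ES, w (κ e) ∂noiseMeasure n = 1 := by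
      simp [Finset.sdiff_self]
    rw [hB1, mul_one]
    have h1 : (fun θ : Fin n → ℝ => ∏ e ∈ ES, lam * θ e.1.1 * θ e.1.2)
        = fun θ => lam ^ ES.card * ∏ v : Fin n, θ v ^ degE ES v := by
      funext θ
      simp_rw [mul_assoc]
      rw [Finset.prod_mul_distrib, Finset.prod_const, prod_theta_eq]
    rw [h1, hμθ]
    rw [integral_const_mul,
      integral_pi_prod (fun _ : Fin n => bernoulliReal ρ) (fun v x => x ^ degE ES v)]
    congr 1
    have hmom : ∀ v : Fin n, ∫ x, x ^ degE ES v ∂bernoulliReal ρ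
        = if v ∈ VS then ρ else 1 := by
      intro v
      rw [bernoulli_moment hρ0 hρ1]
      by_cases hv : v ∈ VS
      · rw [if_pos hv, if_neg]
        intro h0
        obtain ⟨e, heES, hor⟩ := hnoiso v hv
        unfold degE at h0
        rw [Finset.sum_eq_zero_iff] at h0
        have h0e := h0 e heES
        rcases hor with h | h <;> rw [← h] at h0e <;> simp at h0e
      · rw [if_neg hv, if_pos]
        unfold degE
        refine Finset.sum_eq_zero fun e he => ?_
        rw [if_neg (fun h : e.1.1 = v => hv (h ▸ (hinc e he).1)),
          if_neg (fun h : e.1.2 = v => hv (h ▸ (hinc e he).2))]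
        rfl
    rw [Finset.prod_congr rfl fun v _ => hmom v, Fintype.prod_ite_mem VS (fun _ => ρ),
      Finset.prod_const]
  · -- other terms vanish
    intro T hT hne
    rw [integral_prod_mul (f := fun θ : Fin n → ℝ => ∏ e ∈ T, lam * θ e.1.1 * θ e.1.2)
      (g := fun w : SymIdx n → ℝ => ∏ e ∈ ES \ T, w (κ e))]
    have hne' : (ES \ T).Nonempty := by
      rw [Finset.sdiff_nonempty]
      intro hsub
      exact hne (Finset.Subset.antisymm (Finset.mem_powerset.mp hT) hsub)
    obtain ⟨e0, he0⟩ := hne'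
    have hB0 : ∫ w : SymIdx n → ℝ, ∏ e ∈ ES \ T, w (κ e) ∂noiseMeasure n = 0 := by
      rw [hBrw T]
      rw [show (noiseMeasure n)
          = Measure.pi (fun e : SymIdx n => gaussianReal 0 (if e.1.1 = e.1.2 then 2 else 1))
          from rfl,
        integral_pi_prod (fun e : SymIdx n => gaussianReal 0 (if e.1.1 = e.1.2 then 2 else 1))
          (fun u x => if u ∈ (ES \ T).image κ then x else (1:ℝ))]
      refine Finset.prod_eq_zero (Finset.mem_univ (κ e0)) ?_
      simp only [if_pos (Finset.mem_image_of_mem κ he0)]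
      exact integral_id_gaussianReal_zero _
    rw [hB0, mul_zero]
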